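/- Let T be a pointwise map with respect to an oriented hyperplane H on measurable functions, with associated functions F⁺ and F⁻. Then T is monotonic (f ≤ g a.e. implies Tf ≤ Tg a.e.) if and only if F⁺ and F⁻ are increasing in each variable. -/

import Mathlib

open MeasureTheory Set RealInnerProductSpace

theorem stmt_9 {n : ℕ} (u : EuclideanSpace ℝ (Fin n)) (hu : ‖u‖ = 1)
    (T : (EuclideanSpace ℝ (Fin n) → ℝ) → (EuclideanSpace ℝ (Fin n) → ℝ))
    (Fp Fm : ℝ → ℝ → ℝ)
    (hdiag : ∀ s : ℝ, Fp s s = Fm s s)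
    (hpt : ∀ f x, T f x =
      if 0 ≤ ⟪x, u⟫ then Fp (f x) (f (x - (2 * ⟪x, u⟫) • u))
      else Fm (f x) (f (x - (2 * ⟪x, u⟫) • u)))
    (hmeas : ∀ f, Measurable f → Measurable (T f)) :
    (∀ f g, Measurable f → Measurable g →
        f ≤ᵐ[volume] g → T f ≤ᵐ[volume] T g) ↔
      ((∀ s : ℝ, Monotone fun r => Fp r s) ∧ (∀ r : ℝ, Monotone fun s => Fp r s) ∧
       (∀ s : ℝ, Monotone fun r => Fm r s) ∧ (∀ r : ℝ, Monotone fun s => Fm r s)) := by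
  classical
  have hn : ⟪u, u⟫ = (1:ℝ) := by
    rw [real_inner_self_eq_norm_sq, hu]; norm_num
  set R : EuclideanSpace ℝ (Fin n) → EuclideanSpace ℝ (Fin n) :=
    fun x => x - (2 * ⟪x, u⟫) • u with hRdef
  have hinner : Continuous fun x : EuclideanSpace ℝ (Fin n) => ⟪x, u⟫ :=
    continuous_id.inner continuous_const
  have hRrefl : ∀ x, (Submodule.reflection ((ℝ ∙ u)ᗮ)) x = R x := by
    intro x
    rw [Submodule.reflection_apply, Submodule.starProjection_orthogonal_val, Submodule.starProjection_singleton]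
    rw [hu, real_inner_comm]
    simp only [hRdef, two_smul]
    module
  have hRmp : MeasurePreserving R (volume) (volume) := by
    have := (Submodule.reflection ((ℝ ∙ u)ᗮ) :
      EuclideanSpace ℝ (Fin n) ≃ₗᵢ[ℝ] EuclideanSpace ℝ (Fin n)).measurePreserving
    have heq : (Submodule.reflection ((ℝ ∙ u)ᗮ) : EuclideanSpace ℝ (Fin n) → EuclideanSpace ℝ (Fin n)) = R :=
      funext hRrefl
    rwa [heq] at this
  have hRinner : ∀ x, ⟪R x, u⟫ = -⟪x, u⟫ := by
    intro x
    simp only [hRdef, inner_sub_left, real_inner_smul_left, hn]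
    ring
  constructor
  · intro hT
    -- step functions
    have hstepm : ∀ a b : ℝ,
        Measurable (fun x : EuclideanSpace ℝ (Fin n) => if 0 ≤ ⟪x, u⟫ then a else b) := by
      intro a b
      exact Measurable.ite (measurableSet_le measurable_const hinner.measurable)
        measurable_const measurable_const
    have main : ∀ a b a' b' : ℝ, a ≤ a' → b ≤ b' →
        Fp a b ≤ Fp a' b' ∧ Fm b a ≤ Fm b' a' := by
      intro a b a' b' haa hbb
      set f : EuclideanSpace ℝ (Fin n) → ℝ := fun x => if 0 ≤ ⟪x, u⟫ then a else b with hf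
      set g : EuclideanSpace ℝ (Fin n) → ℝ := fun x => if 0 ≤ ⟪x, u⟫ then a' else b' with hg
      have hle : f ≤ᵐ[volume] g := by
        filter_upwards with x
        simp only [hf, hg]
        split_ifs <;> assumption
      have h := hT f g (hstepm a b) (hstepm a' b') hle
      have hTf : ∀ x, 0 < ⟪x, u⟫ → T f x = Fp a b ∧ T g x = Fp a' b' := by
        intro x hx
        have hx' : ¬ (0 ≤ ⟪R x, u⟫) := by rw [hRinner]; linarith
        constructor
        · rw [hpt f x, if_pos hx.le]
          simp only [hf]
          rw [if_pos hx.le, if_neg hx']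
        · rw [hpt g x, if_pos hx.le]
          simp only [hg]
          rw [if_pos hx.le, if_neg hx']
      have hTfm : ∀ x, ⟪x, u⟫ < 0 → T f x = Fm b a ∧ T g x = Fm b' a' := by
        intro x hx
        have hx' : (0 ≤ ⟪R x, u⟫) := by rw [hRinner]; linarith
        have hxn : ¬ (0 ≤ ⟪x, u⟫) := not_le.mpr hx
        constructor
        · rw [hpt f x, if_neg hxn]
          simp only [hf]
          rw [if_neg hxn, if_pos hx']
        · rw [hpt g x, if_neg hxn]
          simp only [hg]
          rw [if_neg hxn, if_pos hx']
      have key : ∀ (U : Set (EuclideanSpace ℝ (Fin n))) (c c' : ℝ), IsOpen U → U.Nonempty →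
          (∀ x ∈ U, T f x = c ∧ T g x = c') → c ≤ c' := by
        intro U c c' hUo hUne hUval
        by_contra hcc
        have hsub : U ⊆ {x | ¬ T f x ≤ T g x} := by
          intro x hx
          have := hUval x hx
          simp only [mem_setOf_eq, this.1, this.2]
          exact hcc
        have h0 : volume U = 0 :=
          measure_mono_null hsub (by have := ae_iff.mp h; simpa [not_le] using this)
        exact absurd h0 (hUo.measure_pos volume hUne).ne'
      constructor
      · refine key {x | 0 < ⟪x, u⟫} _ _ (isOpen_lt continuous_const hinner) ⟨u, by
          show (0:ℝ) < ⟪u, u⟫; rw [hn]; norm_num⟩ ?_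
        intro x hx; exact hTf x hx
      · refine key {x | ⟪x, u⟫ < 0} _ _ (isOpen_lt hinner continuous_const) ⟨-u, by
          show ⟪-u, u⟫ < (0:ℝ); rw [inner_neg_left, hn]; norm_num⟩ ?_
        intro x hx; exact hTfm x hx
    refine ⟨?_, ?_, ?_, ?_⟩
    · intro s r r' hrr; exact (main r s r' s hrr le_rfl).1
    · intro r s s' hss; exact (main r s r s' le_rfl hss).1
    · intro s r r' hrr; exact (main s r s r' le_rfl hrr).2
    · intro r s s' hss; exact (main s r s' r hss le_rfl).2
  · rintro ⟨hp1, hp2, hm1, hm2⟩ f g _ _ hfg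
    have hfgR : ∀ᵐ x ∂(volume : Measure (EuclideanSpace ℝ (Fin n))), f (R x) ≤ g (R x) :=
      hRmp.quasiMeasurePreserving.tendsto_ae.eventually hfg
    filter_upwards [hfg, hfgR] with x h1x h2x
    rw [hpt f x, hpt g x]
    split_ifs
    · exact le_trans (hp1 (f (R x)) h1x) (hp2 (g x) h2x)
    · exact le_trans (hm1 (f (R x)) h1x) (hm2 (g x) h2x)
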